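/- For the m×m matrix T(η) with entries T_{ii} = 1+η, T_{ij} = η for i < j, and T_{ij} = 1 for i > j, one has det(T(η)) = 1 + η + η² + ⋯ + η^m. -/

import Mathlib

open Matrix Finset

def Dmat (m : ℕ) (η : ℂ) : Matrix (Fin m) (Fin m) ℂ :=
  Matrix.of fun i j =>
    if (i : ℕ) = 0 then η else if (i : ℕ) = j then 1 else if (j : ℕ) + 1 = i then -η else 0

lemma det_Dmat (η : ℂ) : ∀ m, (Dmat (m + 1) η).det = ∑ k ∈ Finset.range (m + 1), η ^ (k + 1) := by
  intro m
  induction m with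
  | zero => simp [Dmat, Matrix.det_fin_one]
  | succ n ih =>
    rw [Matrix.det_succ_column_zero (Dmat (n + 2) η)]
    rw [Fin.sum_univ_succ, Fin.sum_univ_succ]
    have h0 : Dmat (n + 2) η 0 0 = η := by simp [Dmat]
    have h1 : Dmat (n + 2) η (Fin.succ 0) 0 = -η := by
      simp [Dmat]
    have hrest : ∀ i : Fin n, Dmat (n + 2) η i.succ.succ 0 = 0 := by
      intro i
      simp [Dmat]
    have hS0 : ((Dmat (n+2) η).submatrix (Fin.succAbove 0) Fin.succ).det = 1 := by
      rw [Matrix.det_of_lowerTriangular]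
      · apply Finset.prod_eq_one
        intro i _
        simp [Dmat]
      · intro i j hij
        simp only [Matrix.submatrix_apply, Fin.succAbove_zero, Dmat, Matrix.of_apply,
          Fin.val_succ]
        have : (i : ℕ) < (j : ℕ) := hij
        split_ifs <;> first | ring1 | (exfalso; omega) | exact (‹False›).elim
    have hS1 : (Dmat (n+2) η).submatrix (Fin.succAbove (Fin.succ 0)) Fin.succ = Dmat (n+1) η := by
      ext i j
      simp only [Matrix.submatrix_apply, Dmat, Matrix.of_apply]
      rcases Fin.eq_zero_or_eq_succ i with rfl | ⟨i', rfl⟩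
      · rw [Fin.succ_succAbove_zero]
        simp
      · rw [Fin.succ_succAbove_succ, Fin.succAbove_zero]
        simp only [Fin.val_succ]
        split_ifs <;> first | rfl | (exfalso; omega)
    rw [h0, h1, hS0, hS1, ih]
    simp only [hrest, mul_zero, zero_mul, Finset.sum_const_zero, add_zero]
    rw [Finset.sum_range_succ' (fun k => η ^ (k + 1)) (n + 1)]
    have hsum : η * ∑ k ∈ Finset.range (n+1), η^(k+1) = ∑ k ∈ Finset.range (n+1), η^(k+1+1) := by
      rw [Finset.mul_sum]; exact Finset.sum_congr rfl fun k _ => by ring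
    rw [← hsum]
    simp only [Fin.val_succ, Fin.val_zero]
    ring

def Bmat (m : ℕ) (η : ℂ) : Matrix (Fin m) (Fin m) ℂ :=
  Matrix.of fun i j =>
    if (i : ℕ) = 0 then (if (j : ℕ) = 0 then 1 + η else η)
    else if (i : ℕ) = j then 1 else if (j : ℕ) + 1 = i then -η else 0

lemma det_Bmat (η : ℂ) : ∀ m, (Bmat (m + 1) η).det = ∑ k ∈ Finset.range (m + 2), η ^ k := by
  intro m
  cases m with
  | zero => simp [Bmat, Matrix.det_fin_one, Finset.sum_range_succ]
  | succ n =>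
    rw [Matrix.det_succ_column_zero (Bmat (n + 2) η)]
    rw [Fin.sum_univ_succ, Fin.sum_univ_succ]
    have h0 : Bmat (n + 2) η 0 0 = 1 + η := by simp [Bmat]
    have h1 : Bmat (n + 2) η (Fin.succ 0) 0 = -η := by simp [Bmat]
    have hrest : ∀ i : Fin n, Bmat (n + 2) η i.succ.succ 0 = 0 := by
      intro i; simp [Bmat]
    have hS0 : ((Bmat (n+2) η).submatrix (Fin.succAbove 0) Fin.succ).det = 1 := by
      rw [Matrix.det_of_lowerTriangular]
      · apply Finset.prod_eq_one
        intro i _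
        simp [Bmat]
      · intro i j hij
        simp only [Matrix.submatrix_apply, Fin.succAbove_zero, Bmat, Matrix.of_apply,
          Fin.val_succ]
        have : (i : ℕ) < (j : ℕ) := hij
        split_ifs <;> first | ring1 | (exfalso; omega) | exact (‹False›).elim
    have hS1 : (Bmat (n+2) η).submatrix (Fin.succAbove (Fin.succ 0)) Fin.succ = Dmat (n+1) η := by
      ext i j
      simp only [Matrix.submatrix_apply, Bmat, Dmat, Matrix.of_apply]
      rcases Fin.eq_zero_or_eq_succ i with rfl | ⟨i', rfl⟩
      · rw [Fin.succ_succAbove_zero]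
        simp
      · rw [Fin.succ_succAbove_succ, Fin.succAbove_zero]
        simp only [Fin.val_succ]
        split_ifs <;> first | rfl | (exfalso; omega) | exact (‹False›).elim
    rw [h0, h1, hS0, hS1, det_Dmat]
    simp only [hrest, mul_zero, zero_mul, Finset.sum_const_zero, add_zero]
    rw [Finset.sum_range_succ' (fun k => η ^ k) (n + 2),
        Finset.sum_range_succ' (fun k => η ^ (k + 1)) (n + 1)]
    have hsum : η * ∑ k ∈ Finset.range (n+1), η^(k+1) = ∑ k ∈ Finset.range (n+1), η^(k+1+1) := by
      rw [Finset.mul_sum]; exact Finset.sum_congr rfl fun k _ => by ring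
    rw [← hsum]
    simp only [Fin.val_succ, Fin.val_zero]
    ring

def Lmat (m : ℕ) : Matrix (Fin m) (Fin m) ℂ :=
  Matrix.of fun i j => if (i : ℕ) = j then 1 else if (j : ℕ) + 1 = i then -1 else 0

lemma det_Lmat (m : ℕ) : (Lmat m).det = 1 := by
  rw [Matrix.det_of_lowerTriangular]
  · apply Finset.prod_eq_one
    intro i _
    simp [Lmat]
  · intro i j hij
    have : (i : ℕ) < (j : ℕ) := hij
    simp only [Lmat, Matrix.of_apply]
    split_ifs <;> first | rfl | (exfalso; omega)

def Tmat (m : ℕ) (η : ℂ) : Matrix (Fin m) (Fin m) ℂ :=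
  Matrix.of (fun i j : Fin m => if i = j then 1 + η else if i < j then η else 1)

lemma mul_L_T (η : ℂ) (n : ℕ) : Lmat (n+1) * Tmat (n+1) η = Bmat (n+1) η := by
  ext i j
  rw [Matrix.mul_apply]
  have hL : ∀ k : Fin (n+1), Lmat (n+1) i k
      = (if k = i then (1:ℂ) else 0) + (if (k:ℕ) + 1 = i then -1 else 0) := by
    intro k
    simp only [Lmat, Matrix.of_apply, Fin.ext_iff]
    split_ifs <;> first | ring1 | (exfalso; omega)
  simp only [hL, add_mul, ite_mul, one_mul, zero_mul, neg_one_mul]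
  rw [Finset.sum_add_distrib, Finset.sum_ite_eq' Finset.univ i (fun k => Tmat (n+1) η k j)]
  simp only [Finset.mem_univ, if_true]
  rcases Fin.eq_zero_or_eq_succ i with rfl | ⟨i', rfl⟩
  · rw [Finset.sum_eq_zero (fun k _ => by
      have : ¬ ((k:ℕ) + 1 = ((0 : Fin (n+1)) : ℕ)) := by
        simp only [Fin.val_zero]; omega
      simp [this])]
    simp only [add_zero, Tmat, Bmat, Matrix.of_apply, Fin.ext_iff, Fin.lt_def, Fin.val_zero]
    by_cases hj : (j:ℕ) = 0
    · simp [hj]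
    · simp [hj, Ne.symm hj, Nat.pos_of_ne_zero hj]
  · have hstep : ∀ k : Fin _, (if (k:ℕ) + 1 = (i'.succ : ℕ) then -Tmat _ η k j else 0)
        = (if k = i'.castSucc then -Tmat _ η k j else 0) := by
      intro k
      have : ((k:ℕ) + 1 = (i'.succ : ℕ)) ↔ k = i'.castSucc := by
        rw [Fin.ext_iff, Fin.coe_castSucc, Fin.val_succ]
        omega
      simp only [this]
    rw [Finset.sum_congr rfl (fun k _ => hstep k),
        Finset.sum_ite_eq' Finset.univ i'.castSucc (fun k => -Tmat _ η k j)]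
    simp only [Finset.mem_univ, if_true]
    simp only [Tmat, Bmat, Matrix.of_apply, Fin.ext_iff, Fin.lt_def, Fin.val_succ,
      Fin.coe_castSucc, Fin.val_zero]
    split_ifs <;> first | ring1 | (exfalso; omega) | exact (‹False›).elim

theorem det_T_eta (m : ℕ) (η : ℂ) :
    (Matrix.of (fun i j : Fin m =>
      if i = j then 1 + η else if i < j then η else 1)).det
    = ∑ k ∈ Finset.range (m + 1), η ^ k := by
  cases m with
  | zero => simp [Matrix.det_fin_zero]
  | succ n =>
    have h := congrArg Matrix.det (mul_L_T η n)
    rw [Matrix.det_mul, det_Lmat, one_mul] at h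
    have : (Matrix.of (fun i j : Fin (n+1) =>
      if i = j then 1 + η else if i < j then η else 1)) = Tmat (n+1) η := rfl
    rw [this, h, det_Bmat]
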